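/- Under the active-set hypotheses, let (x_{g(1)}, …, x_{g(τ)}) be the subsequence of queried points (those rounds t with Q_t = 1), listed in time order. Fix j ∈ {1, …, τ} and ζ > 0 with w_{g(j)} > ζ. If there exist K pairwise disjoint subsequences of (x_{g(1)}, …, x_{g(j−1)}) such that x_{g(j)} is (ζ/2)-dependent (with respect to F and f⋆) on each of them, then K < 16β/ζ². -/

import Mathlib

/-- `x` is `ζ`-dependent (with respect to `F` and `f⋆`) on the finite subsequence of the
sequence `z` indexed by `S`: every `f ∈ F` with `Σ_{i ∈ S} (f (z i) - f⋆ (z i))² ≤ ζ²`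
satisfies `|f x - f⋆ x| ≤ ζ`. -/
def ZetaDep {X : Type*} (F : Set (X → ℝ)) (fstar : X → ℝ) (ζ : ℝ)
    (z : ℕ → X) (S : Finset ℕ) (x : X) : Prop :=
  ∀ f ∈ F, (∑ i ∈ S, (f (z i) - fstar (z i)) ^ 2 ≤ ζ ^ 2) → |f x - fstar x| ≤ ζ

/-- The width of the set `G` of functions at a point `x`:
`w(x) = sup_{f, f' ∈ G} |f x - f' x|`. -/
noncomputable def width {X : Type*} (G : Set (X → ℝ)) (x : X) : ℝ :=
  sSup {r : ℝ | ∃ f ∈ G, ∃ f' ∈ G, r = |f x - f' x|}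

/-- First claim in the proof of the eluder-dimension width-counting lemma: under the
active-set hypotheses, if `t` is a queried round (`Q_t = 1`) with width `w_t > ζ`, and
`S₁, …, S_K` are pairwise disjoint sets of earlier queried indices such that `x_t` is
`(ζ/2)`-dependent on each corresponding subsequence, then `K < 16β/ζ²`. -/
theorem stmt_18 {X : Type*} (F : Set (X → ℝ))
    (hFb : ∀ f ∈ F, ∀ v, f v ∈ Set.Icc (0 : ℝ) 1)
    (fstar : X → ℝ) (hstar : fstar ∈ F)
    (T : ℕ) (x : ℕ → X) (Q : ℕ → ℝ) (hQ : ∀ t, Q t = 0 ∨ Q t = 1)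
    (β : ℝ) (hβ : 0 < β)
    (Fs : ℕ → Set (X → ℝ)) (hFsub : ∀ t, Fs t ⊆ F) (hFstar : ∀ t, fstar ∈ Fs t)
    (hFbound : ∀ t, 1 ≤ t → t ≤ T → ∀ f ∈ Fs t,
      ∑ i ∈ Finset.Icc 1 (t - 1), Q i * (f (x i) - fstar (x i)) ^ 2 ≤ 4 * β)
    (ζ : ℝ) (hζ : 0 < ζ)
    (t : ℕ) (ht1 : 1 ≤ t) (htT : t ≤ T) (hQt : Q t = 1)
    (hw : ζ < width (Fs t) (x t))
    (K : ℕ) (S : Fin K → Finset ℕ)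
    (hSidx : ∀ k, ∀ i ∈ S k, 1 ≤ i ∧ i < t ∧ Q i = 1)
    (hSdisj : ∀ k k', k ≠ k' → Disjoint (S k) (S k'))
    (hSdep : ∀ k, ZetaDep F fstar (ζ / 2) x (S k) (x t)) :
    (K : ℝ) < 16 * β / ζ ^ 2 := by
  classical
  have hζ2 : (0 : ℝ) < ζ ^ 2 := by positivity
  rcases Nat.eq_zero_or_pos K with hK0 | hKpos
  · subst hK0
    simpa using div_pos (by linarith) hζ2
  -- extract a function g ∈ Fs t with |g (x t) - fstar (x t)| > ζ/2
  have hbdd : BddAbove {r : ℝ | ∃ f ∈ Fs t, ∃ f' ∈ Fs t, r = |f (x t) - f' (x t)|} := by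
    refine ⟨1, ?_⟩
    rintro r ⟨f, hf, f', hf', rfl⟩
    have h1 := hFb f (hFsub t hf) (x t)
    have h2 := hFb f' (hFsub t hf') (x t)
    rw [Set.mem_Icc] at h1 h2
    rw [abs_sub_le_iff]; constructor <;> linarith
  have hne : {r : ℝ | ∃ f ∈ Fs t, ∃ f' ∈ Fs t, r = |f (x t) - f' (x t)|}.Nonempty :=
    ⟨0, fstar, hFstar t, fstar, hFstar t, by simp⟩
  obtain ⟨r, ⟨f, hf, f', hf', rfl⟩, hr⟩ := (lt_csSup_iff hbdd hne).mp hw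
  obtain ⟨g, hg, hgζ⟩ : ∃ g ∈ Fs t, ζ / 2 < |g (x t) - fstar (x t)| := by
    by_cases h : ζ / 2 < |f (x t) - fstar (x t)|
    · exact ⟨f, hf, h⟩
    · refine ⟨f', hf', ?_⟩
      have htri : |f (x t) - f' (x t)| ≤ |f (x t) - fstar (x t)| + |f' (x t) - fstar (x t)| := by
        calc |f (x t) - f' (x t)| = |(f (x t) - fstar (x t)) - (f' (x t) - fstar (x t))| := by
              ring_nf
          _ ≤ _ := abs_sub _ _
      push_neg at h
      linarith
  -- each S k forces a big sum for g
  have hbig : ∀ k : Fin K, (ζ / 2) ^ 2 < ∑ i ∈ S k, (g (x i) - fstar (x i)) ^ 2 := by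
    intro k
    by_contra h
    push_neg at h
    exact absurd (hSdep k g (hFsub t hg) h) (not_le.mpr hgζ)
  set U : Finset ℕ := Finset.univ.biUnion S with hU
  have hUsub : U ⊆ Finset.Icc 1 (t - 1) := by
    intro i hi
    rw [hU, Finset.mem_biUnion] at hi
    obtain ⟨k, _, hk⟩ := hi
    obtain ⟨h1, h2, _⟩ := hSidx k i hk
    rw [Finset.mem_Icc]; omega
  have hsum1 : (K : ℝ) * (ζ / 2) ^ 2 < ∑ i ∈ U, (g (x i) - fstar (x i)) ^ 2 := by
    rw [hU, Finset.sum_biUnion (fun k _ k' _ hkk' => hSdisj k k' hkk')]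
    calc (K : ℝ) * (ζ / 2) ^ 2 = ∑ _k : Fin K, (ζ / 2) ^ 2 := by
          simp [Finset.sum_const, mul_comm]
      _ < _ := by
          apply Finset.sum_lt_sum_of_nonempty ?_ (fun k _ => hbig k)
          rw [Finset.univ_nonempty_iff]
          exact Fin.pos_iff_nonempty.mp hKpos
  have hsum2 : ∑ i ∈ U, (g (x i) - fstar (x i)) ^ 2
      ≤ ∑ i ∈ Finset.Icc 1 (t - 1), Q i * (g (x i) - fstar (x i)) ^ 2 := by
    have heq : ∑ i ∈ U, (g (x i) - fstar (x i)) ^ 2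
        = ∑ i ∈ U, Q i * (g (x i) - fstar (x i)) ^ 2 := by
      apply Finset.sum_congr rfl
      intro i hi
      rw [hU, Finset.mem_biUnion] at hi
      obtain ⟨k, _, hk⟩ := hi
      rw [(hSidx k i hk).2.2, one_mul]
    rw [heq]
    apply Finset.sum_le_sum_of_subset_of_nonneg hUsub
    intro i _ _
    rcases hQ i with h | h <;> rw [h] <;> positivity
  have hsum3 := hFbound t ht1 htT g hg
  rw [lt_div_iff₀ hζ2]
  nlinarith [hsum1, hsum2, hsum3]
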